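/- Let $M \ge 2$, let $1 \le k \le M/2$, and let $|\psi\rangle = \sum_{i=1}^{k} |2i-1\rangle \wedge |2i\rangle \in \wedge^2 \mathbb{C}^M$. Then the hyperplane $H = |\psi\rangle^{\perp} \subseteq \wedge^2 \mathbb{C}^M$ is spanned by decomposable 2-vectors; explicitly, $H$ is spanned by the vectors $|i\rangle \wedge |j\rangle$ for $i < j$ with $(i,j) \notin \{(1,2),(3,4),\dots,(2k-1,2k)\}$, together with the $k-1$ decomposable vectors $\left( \sum_{l=1}^{k} \omega^{j(l-1)} |2l-1\rangle \right) \wedge \left( \sum_{l=1}^{k} |2l\rangle \right)$ for $j = 1, \dots, k-1$, where $\omega = e^{2\pi i / k}$. -/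

import Mathlib

open scoped InnerProductSpace

noncomputable section

/-- The `N`-fold tensor power of `ℂ^M`, realized as the Euclidean space with
orthonormal basis indexed by multi-indices `Fin N → Fin M`. -/
abbrev TensorPow (N M : ℕ) : Type := EuclideanSpace ℂ (Fin N → Fin M)

/-- The wedge (Slater determinant) of a family of `N` vectors in `ℂ^M`:
`|v 0⟩ ∧ ⋯ ∧ |v (N-1)⟩ = ∑ σ, sgn σ • |v σ(0), …, v σ(N-1)⟩`. -/
def wedge {N M : ℕ} (v : Fin N → EuclideanSpace ℂ (Fin M)) : TensorPow N M :=
  WithLp.toLp 2 (fun x => ∑ σ : Equiv.Perm (Fin N), ((Equiv.Perm.sign σ : ℤ) : ℂ) * ∏ k, v (σ k) (x k))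

/-- The exterior power `⋀^N ℂ^M`, i.e. the subspace of antisymmetric tensors
in `(ℂ^M)^{⊗N}`. -/
def exteriorPow (N M : ℕ) : Submodule ℂ (TensorPow N M) where
  carrier := {ψ | ∀ σ : Equiv.Perm (Fin N), ∀ x : Fin N → Fin M,
    ψ (x ∘ σ) = ((Equiv.Perm.sign σ : ℤ) : ℂ) * ψ x}
  add_mem' := by
    intro a b ha hb σ x
    have h1 := ha σ x
    have h2 := hb σ x
    show a (x ∘ σ) + b (x ∘ σ) = ((Equiv.Perm.sign σ : ℤ) : ℂ) * (a x + b x)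
    rw [h1, h2]; ring
  zero_mem' := by
    intro σ x
    show (0 : ℂ) = ((Equiv.Perm.sign σ : ℤ) : ℂ) * (0 : ℂ)
    ring
  smul_mem' := by
    intro c a ha σ x
    have h1 := ha σ x
    show c * a (x ∘ σ) = ((Equiv.Perm.sign σ : ℤ) : ℂ) * (c * a x)
    rw [h1]; ring

/-- A decomposable (Slater determinant) vector in `⋀^N ℂ^M`. -/
def IsSlater {N M : ℕ} (ψ : TensorPow N M) : Prop :=
  ∃ v : Fin N → EuclideanSpace ℂ (Fin M), ψ = wedge v


/-- The standard basis vector `|j+1⟩` of `ℂ^M` (0-based index `j`). -/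
def basisVec (M j : ℕ) : EuclideanSpace ℂ (Fin M) :=
  WithLp.toLp 2 (fun m => if (m : ℕ) = j then 1 else 0)


section AuxLemmas

lemma wedge_apply2 {M : ℕ} (u w : EuclideanSpace ℂ (Fin M)) (x : Fin 2 → Fin M) :
    wedge ![u, w] x = u (x 0) * w (x 1) - w (x 0) * u (x 1) := by
  have huniv : (Finset.univ : Finset (Equiv.Perm (Fin 2))) = {1, Equiv.swap 0 1} := by decide
  show (∑ σ : Equiv.Perm (Fin 2), ((Equiv.Perm.sign σ : ℤ) : ℂ) * ∏ k, (![u,w]) (σ k) (x k)) = _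
  rw [huniv, Finset.sum_insert (by decide), Finset.sum_singleton]
  simp [Fin.prod_univ_two]
  ring

lemma wedge_mem_ext {N M : ℕ} (v : Fin N → EuclideanSpace ℂ (Fin M)) :
    wedge v ∈ exteriorPow N M := by
  intro σ x
  show wedge v (x ∘ σ) = ((Equiv.Perm.sign σ : ℤ) : ℂ) * wedge v x
  unfold wedge
  rw [Finset.mul_sum]
  apply Fintype.sum_equiv (Equiv.mulRight σ⁻¹)
  intro ρ
  simp only [Equiv.coe_mulRight, Equiv.Perm.mul_apply, Function.comp_apply]
  rw [← Equiv.prod_comp σ (fun k => v (ρ (σ⁻¹ k)) (x k))]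
  simp only [show ∀ k, σ⁻¹ (σ k) = k from fun k => Equiv.Perm.inv_eq_iff_eq.mpr rfl]
  rw [Equiv.Perm.sign_mul, Equiv.Perm.sign_inv]
  rcases Int.units_eq_one_or (Equiv.Perm.sign σ) with h|h <;>
    rcases Int.units_eq_one_or (Equiv.Perm.sign ρ) with h'|h' <;>
      simp [h, h']

lemma eta2 {α : Type*} (x : Fin 2 → α) : x = ![x 0, x 1] := by
  funext i; fin_cases i <;> rfl

lemma comp_swap {α : Type*} (a b : α) : (![a, b] : Fin 2 → α) ∘ Equiv.swap 0 1 = ![b, a] := by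
  funext i; fin_cases i <;> simp [Equiv.swap_apply_left, Equiv.swap_apply_right]

lemma Wn_apply {M : ℕ} (a b : ℕ) (x : Fin 2 → Fin M) :
    wedge ![basisVec M a, basisVec M b] x =
      (if (x 0 : ℕ) = a ∧ (x 1 : ℕ) = b then 1 else 0)
        - (if (x 0 : ℕ) = b ∧ (x 1 : ℕ) = a then 1 else 0) := by
  rw [wedge_apply2]
  simp only [basisVec]
  split_ifs <;> simp_all

lemma smul_apply2 {M : ℕ} (c : ℂ) (f : TensorPow 2 M) (x : Fin 2 → Fin M) :
    (c • f) x = c * f x := rfl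

lemma wedge_comm2 {M : ℕ} (u w : EuclideanSpace ℂ (Fin M)) :
    wedge ![u, w] = -wedge ![w, u] := by
  ext x
  show wedge ![u, w] x = -(wedge ![w, u] x)
  rw [wedge_apply2, wedge_apply2]
  ring

lemma cond_iff2 {M : ℕ} (a b : ℕ) (ha : a < M) (hb : b < M) (x : Fin 2 → Fin M) :
    ((x 0 : ℕ) = a ∧ (x 1 : ℕ) = b) ↔ x = ![(⟨a, ha⟩ : Fin M), ⟨b, hb⟩] := by
  rw [funext_iff, Fin.forall_fin_two]
  simp [Fin.ext_iff]

lemma inner_Wn {M : ℕ} (a b : ℕ) (ha : a < M) (hb : b < M) (φ : TensorPow 2 M) :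
    ⟪wedge ![basisVec M a, basisVec M b], φ⟫_ℂ =
      φ ![(⟨a, ha⟩ : Fin M), ⟨b, hb⟩] - φ ![(⟨b, hb⟩ : Fin M), ⟨a, ha⟩] := by
  rw [PiLp.inner_apply]
  simp only [RCLike.inner_apply, Wn_apply, map_sub, apply_ite (starRingEnd ℂ), map_one, map_zero,
    cond_iff2 a b ha hb, cond_iff2 b a hb ha, sub_mul, ite_mul, one_mul, zero_mul]
  simp only [mul_sub, mul_ite, mul_one, mul_zero]
  rw [Finset.sum_sub_distrib, Finset.sum_ite_eq' Finset.univ, Finset.sum_ite_eq' Finset.univ]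
  simp

lemma wedge_bilin {M : ℕ} {ι κ : Type*} (s : Finset ι) (t : Finset κ)
    (a : ι → ℂ) (u : ι → EuclideanSpace ℂ (Fin M)) (v : κ → EuclideanSpace ℂ (Fin M)) :
    wedge ![∑ l ∈ s, a l • u l, ∑ m ∈ t, v m] =
      ∑ l ∈ s, ∑ m ∈ t, a l • wedge ![u l, v m] := by
  ext x
  have hs : ∀ y : Fin M, (∑ l ∈ s, a l • u l) y = ∑ l ∈ s, a l * u l y := by
    intro y; rw [WithLp.ofLp_sum, Finset.sum_apply]; rfl
  have ht : ∀ y : Fin M, (∑ m ∈ t, v m) y = ∑ m ∈ t, v m y := by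
    intro y; rw [WithLp.ofLp_sum, Finset.sum_apply]
  have hR : (∑ l ∈ s, ∑ m ∈ t, a l • wedge ![u l, v m]) x
      = ∑ l ∈ s, ∑ m ∈ t, a l * wedge ![u l, v m] x := by
    rw [WithLp.ofLp_sum, Finset.sum_apply]
    refine Finset.sum_congr rfl fun l _ => ?_
    rw [WithLp.ofLp_sum, Finset.sum_apply]; rfl
  have e1 : (∑ l ∈ s, a l • u l) (x 0) * (∑ m ∈ t, v m) (x 1)
      = ∑ l ∈ s, ∑ m ∈ t, (a l * u l (x 0)) * v m (x 1) := by
    rw [hs, ht, Finset.sum_mul_sum]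
  have e2 : (∑ m ∈ t, v m) (x 0) * (∑ l ∈ s, a l • u l) (x 1)
      = ∑ l ∈ s, ∑ m ∈ t, v m (x 0) * (a l * u l (x 1)) := by
    rw [hs, ht, Finset.sum_mul_sum, Finset.sum_comm]
  rw [hR, wedge_apply2, e1, e2, ← Finset.sum_sub_distrib]
  refine Finset.sum_congr rfl fun l _ => ?_
  rw [← Finset.sum_sub_distrib]
  refine Finset.sum_congr rfl fun m _ => ?_
  rw [wedge_apply2]
  ring

lemma geom_root_sum (k n : ℕ) (hk : 0 < k) :
    ∑ j ∈ Finset.range k,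
      ((Complex.exp (2 * (Real.pi : ℂ) * Complex.I / (k : ℂ))) ^ n) ^ j =
      if k ∣ n then (k : ℂ) else 0 := by
  have hprim : IsPrimitiveRoot (Complex.exp (2 * (Real.pi : ℂ) * Complex.I / (k : ℂ))) k :=
    Complex.isPrimitiveRoot_exp k hk.ne'
  by_cases hdvd : k ∣ n
  · have h1 : (Complex.exp (2 * (Real.pi : ℂ) * Complex.I / (k : ℂ))) ^ n = 1 := by
      obtain ⟨c, rfl⟩ := hdvd
      rw [pow_mul, hprim.pow_eq_one, one_pow]
    simp [h1, hdvd]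
  · have hne : (Complex.exp (2 * (Real.pi : ℂ) * Complex.I / (k : ℂ))) ^ n ≠ 1 := by
      intro h
      exact hdvd ((hprim.pow_eq_one_iff_dvd n).1 h)
    rw [geom_sum_eq hne, if_neg hdvd]
    have h2 : ((Complex.exp (2 * (Real.pi : ℂ) * Complex.I / (k : ℂ))) ^ n) ^ k = 1 := by
      rw [← pow_mul, mul_comm n k, pow_mul, hprim.pow_eq_one, one_pow]
    rw [h2]
    simp

lemma anti2 {M : ℕ} {ψ : TensorPow 2 M} (hψ : ψ ∈ exteriorPow 2 M) (a b : Fin M) :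
    ψ ![b, a] = -ψ ![a, b] := by
  have hψ' : ∀ σ : Equiv.Perm (Fin 2), ∀ x : Fin 2 → Fin M,
      ψ (x ∘ σ) = ((Equiv.Perm.sign σ : ℤ) : ℂ) * ψ x := hψ
  have h := hψ' (Equiv.swap 0 1) ![a, b]
  rw [comp_swap] at h
  rw [h, Equiv.Perm.sign_swap (by decide)]
  push_cast
  ring

lemma diag2 {M : ℕ} {ψ : TensorPow 2 M} (hψ : ψ ∈ exteriorPow 2 M) (a : Fin M) :
    ψ ![a, a] = 0 := by
  have h := anti2 hψ a a
  linear_combination h / 2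

lemma decomp2 {M : ℕ} (ψ : TensorPow 2 M) (hψ : ψ ∈ exteriorPow 2 M) :
    ψ = ∑ p ∈ Finset.univ.filter (fun p : Fin M × Fin M => p.1 < p.2),
        ψ ![p.1, p.2] • wedge ![basisVec M (p.1 : ℕ), basisVec M (p.2 : ℕ)] := by
  ext x
  rw [WithLp.ofLp_sum, Finset.sum_apply]
  simp only [smul_apply2, Wn_apply]
  have hc1 : ∀ p : Fin M × Fin M,
      (((x 0 : ℕ) = (p.1 : ℕ)) ∧ ((x 1 : ℕ) = (p.2 : ℕ))) ↔ p = (x 0, x 1) := by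
    intro p; simp [Prod.ext_iff, Fin.ext_iff, eq_comm]
  have hc2 : ∀ p : Fin M × Fin M,
      (((x 0 : ℕ) = (p.2 : ℕ)) ∧ ((x 1 : ℕ) = (p.1 : ℕ))) ↔ p = (x 1, x 0) := by
    intro p; simp [Prod.ext_iff, Fin.ext_iff, eq_comm, and_comm]
  simp only [hc1, hc2, mul_sub, mul_ite, mul_one, mul_zero]
  rw [Finset.sum_sub_distrib, Finset.sum_ite_eq' _, Finset.sum_ite_eq' _]
  simp only [Finset.mem_filter, Finset.mem_univ, true_and]
  rcases lt_trichotomy (x 0) (x 1) with hlt | heq | hgt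
  · rw [if_pos hlt, if_neg (by simp; omega), sub_zero]
    conv_lhs => rw [eta2 x]
  · rw [if_neg (by simp [heq]), if_neg (by simp [heq]), sub_zero]
    conv_lhs => rw [eta2 x]
    rw [heq, diag2 hψ]
  · rw [if_neg (by simp; omega), if_pos hgt, zero_sub]
    conv_lhs => rw [eta2 x]
    rw [anti2 hψ (x 1) (x 0)]

end AuxLemmas

/-- For `ψ = ∑_{i=1}^k |2i-1⟩ ∧ |2i⟩`, the hyperplane `H = ψ^⊥ ⊆ ⋀² ℂ^M` is spanned
by the decomposable vectors `|i⟩ ∧ |j⟩` (`i < j`, `(i,j)` not of the form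
`(2l-1, 2l)` with `l ≤ k`) together with the `k-1` decomposable vectors
`(∑_l ω^{j(l-1)} |2l-1⟩) ∧ (∑_l |2l⟩)`, `j = 1, …, k-1`, where `ω = e^{2πi/k}`. -/
theorem hyperplane_spanned_by_slaters (M k : ℕ) (hM : 2 ≤ M) (hk : 1 ≤ k) (hkM : 2 * k ≤ M) :
    Submodule.span ℂ
      ({φ : TensorPow 2 M | ∃ i j : ℕ, i < j ∧ j < M ∧
          (∀ l < k, ¬(i = 2 * l ∧ j = 2 * l + 1)) ∧
          φ = wedge ![basisVec M i, basisVec M j]} ∪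
        {φ : TensorPow 2 M | ∃ j : ℕ, 1 ≤ j ∧ j < k ∧
          φ = wedge ![∑ l ∈ Finset.range k,
              (Complex.exp (2 * (Real.pi : ℂ) * Complex.I / (k : ℂ))) ^ (j * l) •
                basisVec M (2 * l),
            ∑ l ∈ Finset.range k, basisVec M (2 * l + 1)]}) =
      exteriorPow 2 M ⊓
        (Submodule.span ℂ
          {∑ l ∈ Finset.range k, wedge ![basisVec M (2 * l), basisVec M (2 * l + 1)]})ᗮ := by
  have hkpos : 0 < k := hk
  have hknz : (k : ℂ) ≠ 0 := Nat.cast_ne_zero.2 (by omega)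
  -- orthogonality of A-generators
  have horthA : ∀ (i j : ℕ), i < j → j < M → (∀ l < k, ¬(i = 2*l ∧ j = 2*l+1)) →
      ⟪∑ l ∈ Finset.range k, wedge ![basisVec M (2 * l), basisVec M (2 * l + 1)],
        wedge ![basisVec M i, basisVec M j]⟫_ℂ = 0 := by
    intro i j hij hjM hnp
    rw [sum_inner]
    apply Finset.sum_eq_zero
    intro l hl
    have hl' : l < k := Finset.mem_range.1 hl
    rw [inner_Wn (2*l) (2*l+1) (by omega) (by omega), Wn_apply, Wn_apply]
    simp only [Matrix.cons_val_zero, Matrix.cons_val_one, Matrix.head_cons, Matrix.cons_val_fin_one, Fin.val_mk]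
    have hnpl := hnp l hl'
    rw [if_neg (by omega), if_neg (by omega), if_neg (by omega), if_neg (by omega)]
    ring
  -- inner products with basis wedges
  have claimC : ∀ l m : ℕ, l < k → m < k →
      ⟪∑ l' ∈ Finset.range k, wedge ![basisVec M (2 * l'), basisVec M (2 * l' + 1)],
        wedge ![basisVec M (2*l), basisVec M (2*m+1)]⟫_ℂ = if l = m then 2 else 0 := by
    intro l m hl hm
    rw [sum_inner]
    have key : ∀ l' ∈ Finset.range k,
        ⟪wedge ![basisVec M (2 * l'), basisVec M (2 * l' + 1)],
          wedge ![basisVec M (2*l), basisVec M (2*m+1)]⟫_ℂ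
          = if l' = l ∧ l' = m then 2 else 0 := by
      intro l' hl'
      have hl'k := Finset.mem_range.1 hl'
      rw [inner_Wn (2*l') (2*l'+1) (by omega) (by omega), Wn_apply, Wn_apply]
      simp only [Matrix.cons_val_zero, Matrix.cons_val_one, Matrix.head_cons, Matrix.cons_val_fin_one, Fin.val_mk]
      split_ifs <;> (try (exfalso; omega)) <;> norm_num
    rw [Finset.sum_congr rfl key, Finset.sum_eq_single_of_mem l (Finset.mem_range.2 hl)]
    · by_cases h : l = m <;> simp [h]
    · intro b _ hb
      rw [if_neg]
      tauto
  -- orthogonality of B-generators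
  have horthB : ∀ j : ℕ, 1 ≤ j → j < k →
      ⟪∑ l ∈ Finset.range k, wedge ![basisVec M (2 * l), basisVec M (2 * l + 1)],
        wedge ![∑ l ∈ Finset.range k,
            (Complex.exp (2 * (Real.pi : ℂ) * Complex.I / (k : ℂ))) ^ (j * l) •
              basisVec M (2 * l),
          ∑ l ∈ Finset.range k, basisVec M (2 * l + 1)]⟫_ℂ = 0 := by
    intro j hj1 hjk
    rw [wedge_bilin]
    simp only [inner_sum, inner_smul_right]
    have hterm : ∀ l ∈ Finset.range k,
        (∑ m ∈ Finset.range k,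
          (Complex.exp (2 * (Real.pi : ℂ) * Complex.I / (k : ℂ))) ^ (j * l) *
            ⟪∑ l' ∈ Finset.range k, wedge ![basisVec M (2 * l'), basisVec M (2 * l' + 1)],
              wedge ![basisVec M (2 * l), basisVec M (2 * m + 1)]⟫_ℂ)
          = 2 * ((Complex.exp (2 * (Real.pi : ℂ) * Complex.I / (k : ℂ))) ^ j) ^ l := by
      intro l hl
      have hlk := Finset.mem_range.1 hl
      have : ∀ m ∈ Finset.range k,
          (Complex.exp (2 * (Real.pi : ℂ) * Complex.I / (k : ℂ))) ^ (j * l) *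
            ⟪∑ l' ∈ Finset.range k, wedge ![basisVec M (2 * l'), basisVec M (2 * l' + 1)],
              wedge ![basisVec M (2 * l), basisVec M (2 * m + 1)]⟫_ℂ
          = if l = m then (Complex.exp (2 * (Real.pi : ℂ) * Complex.I / (k : ℂ))) ^ (j * l) * 2
            else 0 := by
        intro m hm
        rw [claimC l m hlk (Finset.mem_range.1 hm)]
        split_ifs <;> simp
      rw [Finset.sum_congr rfl this, Finset.sum_ite_eq (Finset.range k) l, if_pos hl,
        mul_comm j l, pow_mul]
      ring
    rw [Finset.sum_congr rfl hterm, ← Finset.mul_sum, geom_root_sum k j hkpos, if_neg, mul_zero]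
    intro hd
    have := Nat.le_of_dvd (by omega) hd
    omega
  apply le_antisymm
  · rw [Submodule.span_le]
    rintro φ (⟨i, j, hij, hjM, hnp, rfl⟩ | ⟨j, hj1, hjk, rfl⟩)
    · exact Submodule.mem_inf.2 ⟨wedge_mem_ext _,
        Submodule.mem_orthogonal_singleton_iff_inner_right.2 (horthA i j hij hjM hnp)⟩
    · exact Submodule.mem_inf.2 ⟨wedge_mem_ext _,
        Submodule.mem_orthogonal_singleton_iff_inner_right.2 (horthB j hj1 hjk)⟩
  · -- the hard direction
    intro ψ hψm
    obtain ⟨hext, horth⟩ := Submodule.mem_inf.1 hψm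
    have hips : ⟪∑ l ∈ Finset.range k, wedge ![basisVec M (2 * l), basisVec M (2 * l + 1)],
        ψ⟫_ℂ = 0 := Submodule.mem_orthogonal_singleton_iff_inner_right.1 horth
    set c : ℕ → ℂ := fun l => if h : 2*l+1 < M then ψ ![⟨2*l, by omega⟩, ⟨2*l+1, h⟩] else 0
      with hcdef
    have hcval : ∀ l, l < k → ∀ (a b : Fin M), (a : ℕ) = 2*l → (b : ℕ) = 2*l+1 →
        c l = ψ ![a, b] := by
      intro l hl a b ha hb
      have h2 : 2*l+1 < M := hb ▸ b.isLt
      rw [hcdef]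
      simp only
      rw [dif_pos h2]
      have ha' : (⟨2*l, by omega⟩ : Fin M) = a := Fin.ext (show 2*l = (a:ℕ) from ha.symm)
      have hb' : (⟨2*l+1, h2⟩ : Fin M) = b := Fin.ext (show 2*l+1 = (b:ℕ) from hb.symm)
      rw [ha', hb']
    have hsum0 : ∑ l ∈ Finset.range k, c l = 0 := by
      have h2 : ⟪∑ l ∈ Finset.range k, wedge ![basisVec M (2 * l), basisVec M (2 * l + 1)],
          ψ⟫_ℂ = ∑ l ∈ Finset.range k, 2 * c l := by
        rw [sum_inner]
        refine Finset.sum_congr rfl fun l hl => ?_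
        have hl' := Finset.mem_range.1 hl
        have h1 : 2*l < M := by omega
        have h2 : 2*l+1 < M := by omega
        rw [inner_Wn (2*l) (2*l+1) h1 h2, anti2 hext ⟨2*l, h1⟩ ⟨2*l+1, h2⟩,
          hcval l hl' ⟨2*l, h1⟩ ⟨2*l+1, h2⟩ rfl rfl]
        ring
      rw [h2, ← Finset.mul_sum] at hips
      have := mul_eq_zero.1 hips
      simpa using this
    -- KEY: k • w_{l₀} - ψ₀ ∈ span
    have hcross : ∀ l m : ℕ, l < k → m < k → l ≠ m →
        wedge ![basisVec M (2*l), basisVec M (2*m+1)] ∈ Submodule.span ℂ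
          ({φ : TensorPow 2 M | ∃ i j : ℕ, i < j ∧ j < M ∧
              (∀ l < k, ¬(i = 2 * l ∧ j = 2 * l + 1)) ∧
              φ = wedge ![basisVec M i, basisVec M j]} ∪
            {φ : TensorPow 2 M | ∃ j : ℕ, 1 ≤ j ∧ j < k ∧
              φ = wedge ![∑ l ∈ Finset.range k,
                  (Complex.exp (2 * (Real.pi : ℂ) * Complex.I / (k : ℂ))) ^ (j * l) •
                    basisVec M (2 * l),
                ∑ l ∈ Finset.range k, basisVec M (2 * l + 1)]}) := by
      intro l m hl hm hlm
      rcases Nat.lt_or_ge l m with h | h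
      · exact Submodule.subset_span (Or.inl ⟨2*l, 2*m+1, by omega, by omega,
          fun l' hl' => by omega, rfl⟩)
      · have hml : m < l := by omega
        rw [wedge_comm2]
        exact Submodule.neg_mem _ (Submodule.subset_span (Or.inl ⟨2*m+1, 2*l, by omega, by omega,
          fun l' hl' => by omega, rfl⟩))
    have key : ∀ l₀ : ℕ, l₀ < k →
        ((k:ℂ) • wedge ![basisVec M (2*l₀), basisVec M (2*l₀+1)]
          - ∑ l ∈ Finset.range k, wedge ![basisVec M (2 * l), basisVec M (2 * l + 1)])
          ∈ Submodule.span ℂ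
          ({φ : TensorPow 2 M | ∃ i j : ℕ, i < j ∧ j < M ∧
              (∀ l < k, ¬(i = 2 * l ∧ j = 2 * l + 1)) ∧
              φ = wedge ![basisVec M i, basisVec M j]} ∪
            {φ : TensorPow 2 M | ∃ j : ℕ, 1 ≤ j ∧ j < k ∧
              φ = wedge ![∑ l ∈ Finset.range k,
                  (Complex.exp (2 * (Real.pi : ℂ) * Complex.I / (k : ℂ))) ^ (j * l) •
                    basisVec M (2 * l),
                ∑ l ∈ Finset.range k, basisVec M (2 * l + 1)]}) := by
      intro l₀ hl₀
      have hsplit : ∀ j : ℕ,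
          wedge ![∑ l ∈ Finset.range k,
              (Complex.exp (2 * (Real.pi : ℂ) * Complex.I / (k : ℂ))) ^ (j * l) •
                basisVec M (2 * l),
            ∑ l ∈ Finset.range k, basisVec M (2 * l + 1)]
          = (∑ l ∈ Finset.range k,
              (Complex.exp (2 * (Real.pi : ℂ) * Complex.I / (k : ℂ))) ^ (j * l) •
                wedge ![basisVec M (2*l), basisVec M (2*l+1)])
            + ∑ l ∈ Finset.range k, ∑ m ∈ (Finset.range k).erase l,
                (Complex.exp (2 * (Real.pi : ℂ) * Complex.I / (k : ℂ))) ^ (j * l) •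
                  wedge ![basisVec M (2*l), basisVec M (2*m+1)] := by
        intro j
        rw [wedge_bilin, ← Finset.sum_add_distrib]
        refine Finset.sum_congr rfl fun l hl => ?_
        exact (Finset.add_sum_erase _ _ hl).symm
      have hT : ∑ j ∈ Finset.Ico 1 k,
          (Complex.exp (2 * (Real.pi : ℂ) * Complex.I / (k : ℂ))) ^ (j * (k - l₀)) •
            (∑ l ∈ Finset.range k,
              (Complex.exp (2 * (Real.pi : ℂ) * Complex.I / (k : ℂ))) ^ (j * l) •
                wedge ![basisVec M (2*l), basisVec M (2*l+1)])
          = (k:ℂ) • wedge ![basisVec M (2*l₀), basisVec M (2*l₀+1)]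
            - ∑ l ∈ Finset.range k, wedge ![basisVec M (2 * l), basisVec M (2 * l + 1)] := by
        simp only [Finset.smul_sum, smul_smul]
        rw [Finset.sum_comm]
        have hS : ∀ l ∈ Finset.range k,
            (∑ j ∈ Finset.Ico 1 k,
              ((Complex.exp (2 * (Real.pi : ℂ) * Complex.I / (k : ℂ))) ^ (j * (k - l₀)) *
                (Complex.exp (2 * (Real.pi : ℂ) * Complex.I / (k : ℂ))) ^ (j * l)) •
                  wedge ![basisVec M (2*l), basisVec M (2*l+1)])
            = ((if l = l₀ then (k:ℂ) else 0) - 1) •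
                wedge ![basisVec M (2*l), basisVec M (2*l+1)] := by
          intro l hl
          have hlk := Finset.mem_range.1 hl
          rw [← Finset.sum_smul]
          congr 1
          have hmerge : ∀ j : ℕ,
              (Complex.exp (2 * (Real.pi : ℂ) * Complex.I / (k : ℂ))) ^ (j * (k - l₀)) *
                (Complex.exp (2 * (Real.pi : ℂ) * Complex.I / (k : ℂ))) ^ (j * l)
              = ((Complex.exp (2 * (Real.pi : ℂ) * Complex.I / (k : ℂ))) ^ (k - l₀ + l)) ^ j := by
            intro j
            rw [← pow_add, show j * (k - l₀) + j * l = (k - l₀ + l) * j from by ring, pow_mul]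
          have hgeo := geom_root_sum k (k - l₀ + l) hkpos
          rw [Finset.sum_range_eq_add_Ico _ hkpos, pow_zero] at hgeo
          have hdvd : (k ∣ (k - l₀ + l)) ↔ l = l₀ := by
            constructor
            · rintro ⟨d, hd⟩
              have hd1 : d = 1 := by
                rcases Nat.lt_or_ge d 1 with h1 | h1
                · interval_cases d <;> omega
                · rcases Nat.lt_or_ge d 2 with h2 | h2
                  · omega
                  · exfalso
                    have h2k : k * 2 ≤ k * d := Nat.mul_le_mul_left k h2
                    have hkk : k * 2 = k + k := by ring
                    omega
              subst hd1
              rw [mul_one] at hd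
              omega
            · intro h
              exact ⟨1, by omega⟩
          have hif : (if k ∣ (k - l₀ + l) then (k:ℂ) else 0) = if l = l₀ then (k:ℂ) else 0 := by
            simp only [hdvd]
          rw [hif] at hgeo
          calc ∑ j ∈ Finset.Ico 1 k,
              (Complex.exp (2 * (Real.pi : ℂ) * Complex.I / (k : ℂ))) ^ (j * (k - l₀)) *
                (Complex.exp (2 * (Real.pi : ℂ) * Complex.I / (k : ℂ))) ^ (j * l)
              = ∑ j ∈ Finset.Ico 1 k,
                ((Complex.exp (2 * (Real.pi : ℂ) * Complex.I / (k : ℂ))) ^ (k - l₀ + l)) ^ j :=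
                Finset.sum_congr rfl fun j _ => hmerge j
            _ = (if l = l₀ then (k:ℂ) else 0) - 1 := by linear_combination hgeo
        rw [Finset.sum_congr rfl hS]
        simp only [sub_smul, ite_smul, zero_smul, one_smul]
        rw [Finset.sum_sub_distrib, Finset.sum_ite_eq' (Finset.range k),
          if_pos (Finset.mem_range.2 hl₀)]
      rw [← hT]
      apply Submodule.sum_mem
      intro j hj
      obtain ⟨hj1, hjk⟩ := Finset.mem_Ico.1 hj
      apply Submodule.smul_mem
      have hB := eq_sub_of_add_eq (hsplit j).symm
      rw [hB]
      apply Submodule.sub_mem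
      · exact Submodule.subset_span (Or.inr ⟨j, hj1, hjk, rfl⟩)
      · apply Submodule.sum_mem
        intro l hl
        apply Submodule.sum_mem
        intro m hm
        apply Submodule.smul_mem
        obtain ⟨hml, hm'⟩ := Finset.mem_erase.1 hm
        exact hcross l m (Finset.mem_range.1 hl) (Finset.mem_range.1 hm') (Ne.symm hml)
    -- decompose ψ
    rw [decomp2 ψ hext]
    rw [← Finset.sum_filter_add_sum_filter_not
      (Finset.univ.filter (fun p : Fin M × Fin M => p.1 < p.2))
      (fun p : Fin M × Fin M => (p.1 : ℕ) % 2 = 0 ∧ (p.2 : ℕ) = (p.1 : ℕ) + 1 ∧ (p.1 : ℕ) < 2*k)]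
    apply Submodule.add_mem
    · -- pair part
      have hpair : ∑ p ∈ (Finset.univ.filter (fun p : Fin M × Fin M => p.1 < p.2)).filter
            (fun p : Fin M × Fin M => (p.1 : ℕ) % 2 = 0 ∧ (p.2 : ℕ) = (p.1 : ℕ) + 1 ∧
              (p.1 : ℕ) < 2*k),
            ψ ![p.1, p.2] • wedge ![basisVec M (p.1 : ℕ), basisVec M (p.2 : ℕ)]
          = ∑ l ∈ Finset.range k, c l • wedge ![basisVec M (2*l), basisVec M (2*l+1)] := by
        refine Finset.sum_bij' (fun p _ => (p.1 : ℕ) / 2)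
          (fun l hl => ((⟨2*l, by have := Finset.mem_range.1 hl; omega⟩ : Fin M),
            (⟨2*l+1, by have := Finset.mem_range.1 hl; omega⟩ : Fin M)))
          ?_ ?_ ?_ ?_ ?_
        · intro p hp
          simp only [Finset.mem_filter, Finset.mem_univ, true_and] at hp
          exact Finset.mem_range.2 (show (p.1 : ℕ) / 2 < k by omega)
        · intro l hl
          have hlk := Finset.mem_range.1 hl
          simp only [Finset.mem_filter, Finset.mem_univ, true_and]
          refine ⟨Fin.mk_lt_mk.2 (by omega), ?_⟩
          omega
        · intro p hp
          simp only [Finset.mem_filter, Finset.mem_univ, true_and] at hp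
          obtain ⟨-, he, h2, -⟩ := hp
          have e1 : (2 * ((p.1 : ℕ) / 2) : ℕ) = (p.1 : ℕ) := by omega
          have e2 : (2 * ((p.1 : ℕ) / 2) + 1 : ℕ) = (p.2 : ℕ) := by omega
          exact Prod.ext (Fin.ext e1) (Fin.ext e2)
        · intro l hl
          show (2*l) / 2 = l
          omega
        · intro p hp
          simp only [Finset.mem_filter, Finset.mem_univ, true_and] at hp
          obtain ⟨hlt, he, h2, hb⟩ := hp
          have h1M : (p.1 : ℕ) < M := p.1.isLt
          have h2M : (p.2 : ℕ) < M := p.2.isLt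
          show ψ ![p.1, p.2] • wedge ![basisVec M (p.1 : ℕ), basisVec M (p.2 : ℕ)]
            = c ((p.1 : ℕ) / 2) • wedge ![basisVec M (2 * ((p.1 : ℕ) / 2)),
                basisVec M (2 * ((p.1 : ℕ) / 2) + 1)]
          rw [show 2 * ((p.1 : ℕ) / 2) = (p.1 : ℕ) from by omega]
          rw [show (p.1 : ℕ) + 1 = (p.2 : ℕ) from by omega]
          rw [hcval ((p.1 : ℕ) / 2) (by omega) p.1 p.2 (by omega) (by omega)]
      rw [hpair]
      have hfin : ∑ l ∈ Finset.range k, c l • wedge ![basisVec M (2*l), basisVec M (2*l+1)]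
          = (k:ℂ)⁻¹ • ∑ l ∈ Finset.range k,
              c l • ((k:ℂ) • wedge ![basisVec M (2*l), basisVec M (2*l+1)]
                - ∑ l' ∈ Finset.range k,
                    wedge ![basisVec M (2 * l'), basisVec M (2 * l' + 1)]) := by
        have expand : ∑ l ∈ Finset.range k,
            c l • ((k:ℂ) • wedge ![basisVec M (2*l), basisVec M (2*l+1)]
              - ∑ l' ∈ Finset.range k, wedge ![basisVec M (2 * l'), basisVec M (2 * l' + 1)])
            = (k:ℂ) • (∑ l ∈ Finset.range k,
                c l • wedge ![basisVec M (2*l), basisVec M (2*l+1)])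
              - (∑ l ∈ Finset.range k, c l) •
                  ∑ l' ∈ Finset.range k, wedge ![basisVec M (2 * l'), basisVec M (2 * l' + 1)] := by
          simp only [smul_sub]
          rw [Finset.sum_sub_distrib, Finset.smul_sum, ← Finset.sum_smul]
          congr 1
          exact Finset.sum_congr rfl fun l _ => smul_comm _ _ _
        rw [expand, hsum0, zero_smul, sub_zero, smul_smul, inv_mul_cancel₀ hknz, one_smul]
      rw [hfin]
      apply Submodule.smul_mem
      apply Submodule.sum_mem
      intro l hl
      apply Submodule.smul_mem
      exact key l (Finset.mem_range.1 hl)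
    · -- non-pair part
      apply Submodule.sum_mem
      intro p hp
      simp only [Finset.mem_filter, Finset.mem_univ, true_and] at hp
      obtain ⟨hlt, hnp⟩ := hp
      apply Submodule.smul_mem
      exact Submodule.subset_span (Or.inl ⟨(p.1 : ℕ), (p.2 : ℕ), hlt, p.2.isLt,
        fun l' hl' => by omega, rfl⟩)
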